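/- Let f ∈ A₁(c), set t = f′(c₁) and s = f′(c₂), and assume s > t > 0. Let X = 2s·(√(s/t) − 1)/(c₂−c₁), which is the unique positive solution of 4s³/((2s + X(c₂−c₁))²) = t. Then for every x ∈ (c₂, 1) with 2s + X(c₂−x) > 0: f(x) ≥ c₄ + (4s³/X)·( 1/(2s + X(c₂−x)) − 1/(2s) ). -/

import Mathlib

open Set Complex

noncomputable section

/-- The doubly-slit plane `ℂ(J)` for `J ⊆ ℝ`. -/
def CSlit (J : Set ℝ) : Set ℂ := {z : ℂ | z.im ≠ 0 ∨ z.re ∈ J}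

/-- `ℂ₁ = ℂ((−1,1))`. -/
def C1 : Set ℂ := CSlit (Set.Ioo (-1 : ℝ) 1)

/-- The class `A₁(c)` of normalized Herglotz functions. -/
structure MemA1 (c₁ c₂ c₃ c₄ : ℝ) (f : ℂ → ℂ) : Prop where
  holo : DifferentiableOn ℂ f C1
  maps : Set.MapsTo f C1 C1
  symm : ∀ z ∈ C1, f (starRingEnd ℂ z) = starRingEnd ℂ (f z)
  upper : ∀ z ∈ C1, 0 < z.im → 0 ≤ (f z).im
  lower : ∀ z ∈ C1, z.im < 0 → (f z).im ≤ 0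
  val1 : f (c₁ : ℂ) = (c₃ : ℂ)
  val2 : f (c₂ : ℂ) = (c₄ : ℂ)

open Metric Filter Topology

lemma isOpen_C1 : IsOpen C1 := by
  have h1 : IsOpen (Complex.im ⁻¹' {0})ᶜ :=
    (isClosed_singleton.preimage Complex.continuous_im).isOpen_compl
  have h2 : IsOpen (Complex.re ⁻¹' (Set.Ioo (-1 : ℝ) 1)) :=
    isOpen_Ioo.preimage Complex.continuous_re
  have : C1 = (Complex.im ⁻¹' {0})ᶜ ∪ Complex.re ⁻¹' (Set.Ioo (-1 : ℝ) 1) := by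
    ext z; simp [C1, CSlit]
  rw [this]; exact h1.union h2

lemma isPreconnected_C1 : IsPreconnected C1 := by
  have hstrip : Convex ℝ (Complex.re ⁻¹' (Set.Ioo (-1 : ℝ) 1)) := by
    have : Complex.re ⁻¹' (Set.Ioo (-1 : ℝ) 1)
        = {z : ℂ | -1 < z.re} ∩ {z : ℂ | z.re < 1} := by
      ext z; simp only [Set.mem_preimage, Set.mem_Ioo, Set.mem_inter_iff, Set.mem_setOf_eq]
    rw [this]
    exact (convex_halfSpace_re_gt (-1)).inter (convex_halfSpace_re_lt 1)
  have hup : IsPreconnected ({z : ℂ | 0 < z.im} ∪ Complex.re ⁻¹' (Set.Ioo (-1 : ℝ) 1)) := by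
    apply IsPreconnected.union (Complex.I)
    · simp
    · simp
    · exact (convex_halfSpace_im_gt 0).isPreconnected
    · exact hstrip.isPreconnected
  have hall : IsPreconnected (({z : ℂ | 0 < z.im} ∪ Complex.re ⁻¹' (Set.Ioo (-1 : ℝ) 1))
      ∪ {z : ℂ | z.im < 0}) := by
    apply IsPreconnected.union (-Complex.I)
    · right; simp
    · simp
    · exact hup
    · exact (convex_halfSpace_im_lt 0).isPreconnected
  have : C1 = ({z : ℂ | 0 < z.im} ∪ Complex.re ⁻¹' (Set.Ioo (-1 : ℝ) 1)) ∪ {z : ℂ | z.im < 0} := by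
    ext z
    simp only [C1, CSlit, Set.mem_setOf_eq, Set.mem_union, Set.mem_preimage]
    constructor
    · rintro (h | h)
      · rcases h.lt_or_gt with h' | h'
        · right; exact h'
        · left; left; exact h'
      · left; right; exact h
    · rintro ((h | h) | h)
      · left; exact h.ne'
      · right; exact h
      · left; exact h.ne
  rw [this]; exact hall


lemma normSq_sub_conj (a b : ℂ) :
    normSq (a - (starRingEnd ℂ) b) = normSq (a - b) + 4 * a.im * b.im := by
  simp only [Complex.normSq_apply, Complex.sub_re, Complex.sub_im, Complex.conj_re,
    Complex.conj_im]
  ring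

lemma abs_div_lt_one {a b : ℂ} (ha : 0 < a.im) (hb : 0 < b.im) :
    ‖(a - b) / (a - (starRingEnd ℂ) b)‖ < 1 := by
  have hne : a - (starRingEnd ℂ) b ≠ 0 := by
    intro h
    have : (a - (starRingEnd ℂ) b).im = 0 := by rw [h]; simp
    simp only [Complex.sub_im, Complex.conj_im] at this
    linarith
  rw [norm_div, div_lt_one (norm_pos_iff.2 hne)]
  have h1 : normSq (a - b) < normSq (a - (starRingEnd ℂ) b) := by
    rw [normSq_sub_conj]
    nlinarith
  rw [Complex.norm_def, Complex.norm_def]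
  exact Real.sqrt_lt_sqrt (Complex.normSq_nonneg _) h1

lemma schwarzPick {f : ℂ → ℂ} (hd : DifferentiableOn ℂ f {z : ℂ | 0 < z.im})
    (hm : ∀ z : ℂ, 0 < z.im → 0 < (f z).im) {z w : ℂ} (hz : 0 < z.im) (hw : 0 < w.im) :
    z.im * w.im * normSq (f z - f w) ≤ normSq (z - w) * ((f z).im * (f w).im) := by
  set φ : ℂ → ℂ := fun u => (u * (starRingEnd ℂ) w - w) / (u - 1) with hφ
  set ψ : ℂ → ℂ := fun v => (v - f w) / (v - (starRingEnd ℂ) (f w)) with hψ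
  have hfw : 0 < (f w).im := hm w hw
  -- denominators
  have hden1 : ∀ u : ℂ, u ∈ ball (0 : ℂ) 1 → u - 1 ≠ 0 := by
    intro u hu h
    rw [sub_eq_zero] at h
    rw [mem_ball_zero_iff, h] at hu
    simp at hu
  have hφim : ∀ u : ℂ, u ∈ ball (0 : ℂ) 1 → 0 < (φ u).im := by
    intro u hu
    have h1 : normSq u < 1 := by
      rw [mem_ball_zero_iff] at hu
      have := Complex.sq_norm u
      nlinarith [norm_nonneg u]
    have h2 : u - 1 ≠ 0 := hden1 u hu
    have h3 : 0 < normSq (u - 1) := Complex.normSq_pos.2 h2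
    have h4 : (φ u).im = w.im * (1 - normSq u) / normSq (u - 1) := by
      rw [hφ]
      simp only [Complex.div_im, Complex.normSq_apply, Complex.mul_re, Complex.mul_im,
        Complex.conj_re, Complex.conj_im, Complex.sub_re, Complex.sub_im, Complex.one_re,
        Complex.one_im]
      ring
    rw [h4]
    have : 0 < 1 - normSq u := by linarith
    positivity
  have hψball : ∀ v : ℂ, 0 < v.im → ψ v ∈ ball (0 : ℂ) 1 := by
    intro v hv
    rw [mem_ball_zero_iff]
    exact abs_div_lt_one hv hfw
  have hφdiff : DifferentiableOn ℂ φ (ball (0 : ℂ) 1) := by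
    apply DifferentiableOn.div
    · exact ((differentiable_id.mul_const _).sub_const _).differentiableOn
    · exact (differentiable_id.sub_const _).differentiableOn
    · exact hden1
  have hφmaps : MapsTo φ (ball (0 : ℂ) 1) {z : ℂ | 0 < z.im} := fun u hu => hφim u hu
  have hfφ : DifferentiableOn ℂ (fun u => f (φ u)) (ball (0 : ℂ) 1) :=
    hd.comp hφdiff hφmaps
  have hGdiff : DifferentiableOn ℂ (fun u => ψ (f (φ u))) (ball (0 : ℂ) 1) := by
    apply DifferentiableOn.div
    · exact hfφ.sub_const _
    · exact hfφ.sub_const _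
    · intro u hu h
      have him : 0 < (f (φ u)).im := hm _ (hφim u hu)
      have : (f (φ u) - (starRingEnd ℂ) (f w)).im = 0 := by rw [h]; simp
      simp only [Complex.sub_im, Complex.conj_im] at this
      linarith
  have hGmaps : MapsTo (fun u => ψ (f (φ u))) (ball (0 : ℂ) 1) (ball (0 : ℂ) 1) := by
    intro u hu
    exact hψball _ (hm _ (hφim u hu))
  have hφ0 : φ 0 = w := by
    rw [hφ]
    simp
  have hG0 : ψ (f (φ 0)) = 0 := by
    rw [hφ0, hψ]
    simp
  -- the point u₀
  set u₀ : ℂ := (z - w) / (z - (starRingEnd ℂ) w) with hu₀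
  have hu₀abs : ‖u₀‖ < 1 := abs_div_lt_one hz hw
  have hzw : z - (starRingEnd ℂ) w ≠ 0 := by
    intro h
    have : (z - (starRingEnd ℂ) w).im = 0 := by rw [h]; simp
    simp only [Complex.sub_im, Complex.conj_im] at this
    linarith
  have hww : (starRingEnd ℂ) w - w ≠ 0 := by
    intro h
    have : ((starRingEnd ℂ) w - w).im = 0 := by rw [h]; simp
    simp only [Complex.sub_im, Complex.conj_im] at this
    linarith
  have hden2 : u₀ - 1 ≠ 0 := by
    intro h
    rw [sub_eq_zero, hu₀, div_eq_one_iff_eq hzw] at h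
    have := congrArg Complex.im h
    simp only [Complex.sub_im, Complex.conj_im] at this
    linarith
  have hφu₀ : φ u₀ = z := by
    rw [hφ]
    simp only
    rw [div_eq_iff hden2, hu₀]
    field_simp
    ring
  have hkey := Complex.norm_le_norm_of_mapsTo_ball hGdiff (hGmaps.mono_right ball_subset_closedBall) hG0 hu₀abs
  rw [hφu₀] at hkey
  -- now convert
  have hfzw : f z - (starRingEnd ℂ) (f w) ≠ 0 := by
    intro h
    have : (f z - (starRingEnd ℂ) (f w)).im = 0 := by rw [h]; simp
    simp only [Complex.sub_im, Complex.conj_im] at this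
    have := hm z hz
    linarith
  rw [hψ] at hkey
  simp only at hkey
  rw [hu₀] at hkey
  rw [norm_div, norm_div, div_le_div_iff₀ (norm_pos_iff.2 hfzw) (norm_pos_iff.2 hzw)]
    at hkey
  have hsq : (‖f z - f w‖ * ‖z - (starRingEnd ℂ) w‖) ^ 2
      ≤ (‖z - w‖ * ‖f z - (starRingEnd ℂ) (f w)‖) ^ 2 := by
    apply pow_le_pow_left₀ (by positivity) hkey
  rw [mul_pow, mul_pow, Complex.sq_norm, Complex.sq_norm, Complex.sq_norm, Complex.sq_norm] at hsq
  rw [normSq_sub_conj, normSq_sub_conj] at hsq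
  nlinarith [Complex.normSq_nonneg (f z - f w), Complex.normSq_nonneg (z - w)]

lemma tendsto_vertical (y : ℝ) :
    Tendsto (fun ε : ℝ => (y : ℂ) + ε * I) (𝓝[>] 0) (𝓝[≠] (y : ℂ)) := by
  apply tendsto_nhdsWithin_of_tendsto_nhds_of_eventually_within
  · have hc : Continuous (fun ε : ℝ => (y : ℂ) + ε * I) := by continuity
    have := hc.tendsto 0
    simp only [Complex.ofReal_zero, zero_mul, add_zero] at this
    exact this.mono_left nhdsWithin_le_nhds
  · filter_upwards [self_mem_nhdsWithin] with ε (hε : 0 < ε)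
    intro h
    have := congrArg Complex.im h
    simp at this
    linarith

lemma im_slope_tendsto {F : ℂ → ℂ} {y : ℝ} {d : ℂ} (hF : HasDerivAt F d (y : ℂ))
    (h0 : (F (y : ℂ)).im = 0) :
    Tendsto (fun ε : ℝ => (F ((y : ℂ) + ε * I)).im / ε) (𝓝[>] 0) (𝓝 d.re) := by
  have hslope : Tendsto (slope F (y : ℂ)) (𝓝[≠] (y : ℂ)) (𝓝 d) :=
    hasDerivAt_iff_tendsto_slope.1 hF
  have h1 : Tendsto (fun ε : ℝ => slope F (y : ℂ) ((y : ℂ) + ε * I)) (𝓝[>] 0) (𝓝 d) :=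
    hslope.comp (tendsto_vertical y)
  have h2 : Tendsto (fun ε : ℝ => (slope F (y : ℂ) ((y : ℂ) + ε * I)).re) (𝓝[>] 0) (𝓝 d.re) :=
    (Complex.continuous_re.tendsto d).comp h1
  apply h2.congr'
  filter_upwards [self_mem_nhdsWithin] with ε (hε : 0 < ε)
  have hne : ((y : ℂ) + ε * I) - (y : ℂ) = ε * I := by ring
  rw [slope_def_field, hne]
  rw [Complex.div_re]
  simp only [Complex.mul_im, Complex.mul_re, Complex.ofReal_re, Complex.ofReal_im, Complex.I_re,
    Complex.I_im, Complex.sub_re, Complex.sub_im, Complex.normSq_apply, h0]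
  field_simp
  ring

lemma deriv_im_eq_zero {F : ℂ → ℂ} {y : ℝ} (hF : DifferentiableAt ℂ F (y : ℂ))
    (hreal : ∀ᶠ a : ℝ in 𝓝 y, (F (a : ℂ)).im = 0) : (deriv F (y : ℂ)).im = 0 := by
  have h1 : HasDerivAt (fun z : ℂ => -I * F z) (-I * deriv F (y : ℂ)) (y : ℂ) :=
    (hF.hasDerivAt).const_mul (-I)
  have h2 : HasDerivAt (fun a : ℝ => ((-I) * F (a : ℂ)).re) ((-I) * deriv F (y : ℂ)).re y :=
    h1.real_of_complex
  have h3 : (fun a : ℝ => ((-I) * F (a : ℂ)).re) = fun a : ℝ => (F (a : ℂ)).im := by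
    funext a
    simp [Complex.mul_re]
  rw [h3] at h2
  have h4 : HasDerivAt (fun _ : ℝ => (0 : ℝ)) ((-I) * deriv F (y : ℂ)).re y := by
    apply h2.congr_of_eventuallyEq
    filter_upwards [hreal] with a ha using ha.symm
  have h5 := h4.unique (hasDerivAt_const y 0)
  simp [Complex.mul_re] at h5 ⊢
  linarith [h5]

lemma mem_C1_of_im {z : ℂ} (h : z.im ≠ 0) : z ∈ C1 := Or.inl h

lemma mem_C1_of_real {y : ℝ} (hy : y ∈ Set.Ioo (-1 : ℝ) 1) : (y : ℂ) ∈ C1 := by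
  right; simpa using hy

lemma upper_subset_C1 : {z : ℂ | 0 < z.im} ⊆ C1 := fun _ hz => mem_C1_of_im (ne_of_gt hz)

section main
variable {c₁ c₂ c₃ c₄ : ℝ} {f : ℂ → ℂ} (hf : MemA1 c₁ c₂ c₃ c₄ f)

include hf

lemma f_real {y : ℝ} (hy : y ∈ Set.Ioo (-1 : ℝ) 1) : (f (y : ℂ)).im = 0 := by
  have h := hf.symm (y : ℂ) (mem_C1_of_real hy)
  rw [Complex.conj_ofReal] at h
  have := congrArg Complex.im h
  simp only [Complex.conj_im] at this
  linarith

lemma f_diffAt {z : ℂ} (hz : z ∈ C1) : DifferentiableAt ℂ f z :=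
  hf.holo.differentiableAt (isOpen_C1.mem_nhds hz)

lemma f_deriv_real {y : ℝ} (hy : y ∈ Set.Ioo (-1 : ℝ) 1) :
    HasDerivAt f ((deriv (fun a : ℝ => (f (a : ℂ)).re) y : ℝ) : ℂ) (y : ℂ) := by
  have hd := (f_diffAt hf (mem_C1_of_real hy)).hasDerivAt
  have him : (deriv f (y : ℂ)).im = 0 := by
    apply deriv_im_eq_zero (f_diffAt hf (mem_C1_of_real hy))
    filter_upwards [isOpen_Ioo.eventually_mem hy] with a ha using f_real hf ha
  have hre : HasDerivAt (fun a : ℝ => (f (a : ℂ)).re) (deriv f (y : ℂ)).re y :=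
    hd.real_of_complex
  have : deriv (fun a : ℝ => (f (a : ℂ)).re) y = (deriv f (y : ℂ)).re := hre.deriv
  rw [this]
  have : ((deriv f (y : ℂ)).re : ℂ) = deriv f (y : ℂ) := by
    rw [Complex.ext_iff]
    simp [him]
  rw [this]
  exact hd

lemma f_deriv_nonneg {y : ℝ} (hy : y ∈ Set.Ioo (-1 : ℝ) 1) :
    0 ≤ deriv (fun a : ℝ => (f (a : ℂ)).re) y := by
  have hd := f_deriv_real hf hy
  have ht := im_slope_tendsto hd (f_real hf hy)
  simp only [Complex.ofReal_re] at ht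
  apply ge_of_tendsto ht
  filter_upwards [self_mem_nhdsWithin] with ε (hε : 0 < ε)
  have hmem : ((y : ℂ) + ε * I) ∈ C1 := by
    apply mem_C1_of_im
    simp [ne_of_gt hε]
  have him : 0 < ((y : ℂ) + ε * I).im := by simp [hε]
  exact div_nonneg (hf.upper _ hmem him) hε.le

lemma f_mono : MonotoneOn (fun a : ℝ => (f (a : ℂ)).re) (Set.Ioo (-1 : ℝ) 1) := by
  apply monotoneOn_of_deriv_nonneg (convex_Ioo _ _)
  · intro y hy
    exact ((f_deriv_real hf hy).real_of_complex.continuousAt).continuousWithinAt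
  · intro y hy
    rw [interior_Ioo] at hy
    exact ((f_deriv_real hf hy).real_of_complex).differentiableAt.differentiableWithinAt
  · intro y hy
    rw [interior_Ioo] at hy
    exact f_deriv_nonneg hf hy

lemma f_nonconst {w : ℂ} (hc₁ : c₁ ∈ Set.Ioo (-1 : ℝ) 1) {t : ℝ} (htpos : 0 < t)
    (ht : t = deriv (fun a : ℝ => (f (a : ℂ)).re) c₁) (hEq : Set.EqOn f (fun _ => w) C1) :
    False := by
  have hev : (fun a : ℝ => (f (a : ℂ)).re) =ᶠ[𝓝 c₁] (fun _ : ℝ => w.re) := by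
    filter_upwards [isOpen_Ioo.eventually_mem hc₁] with a ha
    simp [hEq (mem_C1_of_real ha)]
  have hd := hev.deriv_eq
  rw [deriv_const] at hd
  rw [ht, hd] at htpos
  exact lt_irrefl _ htpos

lemma f_im_pos (hc₁ : c₁ ∈ Set.Ioo (-1 : ℝ) 1) {t : ℝ} (htpos : 0 < t)
    (ht : t = deriv (fun a : ℝ => (f (a : ℂ)).re) c₁) :
    ∀ z : ℂ, 0 < z.im → 0 < (f z).im := by
  intro z hz
  have hzC : z ∈ C1 := mem_C1_of_im hz.ne'
  have hA : AnalyticOnNhd ℂ f C1 := hf.holo.analyticOnNhd isOpen_C1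
  rcases (hA z hzC).eventually_constant_or_nhds_le_map_nhds with hconst | hle
  · exfalso
    have hfreq : ∃ᶠ u in 𝓝[≠] z, f u = (fun _ => f z) u :=
      (hconst.filter_mono nhdsWithin_le_nhds).frequently
    have hEq := hA.eqOn_of_preconnected_of_frequently_eq analyticOnNhd_const
      isPreconnected_C1 hzC hfreq
    exact f_nonconst hf hc₁ htpos ht hEq
  · by_contra hle0
    push_neg at hle0
    have him0 : (f z).im = 0 := le_antisymm hle0 (hf.upper z hzC hz)
    have hU : {u : ℂ | 0 ≤ u.im} ∈ map f (𝓝 z) := by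
      rw [mem_map]
      have hopen : IsOpen {u : ℂ | 0 < u.im} := isOpen_lt continuous_const Complex.continuous_im
      filter_upwards [hopen.mem_nhds hz] with u hu
      exact hf.upper u (mem_C1_of_im (ne_of_gt hu)) hu
    have hU' : {u : ℂ | 0 ≤ u.im} ∈ 𝓝 (f z) := hle hU
    rcases Metric.mem_nhds_iff.1 hU' with ⟨ε, hε, hball⟩
    have hmem : f z - ((ε/2 : ℝ) : ℂ) * I ∈ ball (f z) ε := by
      rw [mem_ball, dist_eq]
      have h1 : (f z - ((ε/2 : ℝ) : ℂ) * I) - f z = -(((ε/2 : ℝ) : ℂ) * I) := by ring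
      rw [h1]
      rw [norm_neg, norm_mul, Complex.norm_real, Complex.norm_I, mul_one, Real.norm_eq_abs]
      rw [abs_of_pos (by linarith)]
      linarith
    have hin := hball hmem
    simp only [Set.mem_setOf_eq, Complex.sub_im, Complex.mul_im, Complex.ofReal_re,
      Complex.ofReal_im, Complex.I_re, Complex.I_im, him0] at hin
    norm_num at hin
    linarith

lemma f_im_neg (hc₁ : c₁ ∈ Set.Ioo (-1 : ℝ) 1) {t : ℝ} (htpos : 0 < t)
    (ht : t = deriv (fun a : ℝ => (f (a : ℂ)).re) c₁) :
    ∀ z : ℂ, z.im < 0 → (f z).im < 0 := by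
  intro z hz
  have hzC : z ∈ C1 := mem_C1_of_im hz.ne
  have hconj : 0 < ((starRingEnd ℂ) z).im := by
    simp only [Complex.conj_im]
    linarith
  have hpos := f_im_pos hf hc₁ htpos ht _ hconj
  have hsym := hf.symm z hzC
  rw [hsym] at hpos
  simp only [Complex.conj_im] at hpos
  linarith

lemma f_julia (hc₁ : c₁ ∈ Set.Ioo (-1 : ℝ) 1) (hc₂ : c₂ ∈ Set.Ioo (-1 : ℝ) 1) {t s : ℝ}
    (htpos : 0 < t) (ht : t = deriv (fun a : ℝ => (f (a : ℂ)).re) c₁)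
    (hs : s = deriv (fun a : ℝ => (f (a : ℂ)).re) c₂) :
    ∀ z : ℂ, 0 < z.im →
      z.im * normSq (f z - (c₄ : ℂ)) ≤ normSq (z - (c₂ : ℂ)) * ((f z).im * s) := by
  intro z hz
  have hm := f_im_pos hf hc₁ htpos ht
  have hd' : DifferentiableOn ℂ f {w : ℂ | 0 < w.im} := hf.holo.mono upper_subset_C1
  have hds : HasDerivAt f ((s : ℝ) : ℂ) (c₂ : ℂ) := by rw [hs]; exact f_deriv_real hf hc₂
  have h0 : (f (c₂ : ℂ)).im = 0 := by rw [hf.val2]; simp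
  have hlim := im_slope_tendsto hds h0
  simp only [Complex.ofReal_re] at hlim
  have hpath : Tendsto (fun ε : ℝ => (c₂ : ℂ) + ε * I) (𝓝[>] 0) (𝓝 (c₂ : ℂ)) :=
    (tendsto_vertical c₂).mono_right nhdsWithin_le_nhds
  have hcont : Tendsto (fun ε : ℝ => f ((c₂ : ℂ) + ε * I)) (𝓝[>] 0) (𝓝 ((c₄ : ℝ) : ℂ)) := by
    have hca : ContinuousAt f (c₂ : ℂ) := (f_diffAt hf (mem_C1_of_real hc₂)).continuousAt
    have := hca.tendsto.comp hpath
    rwa [hf.val2] at this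
  have hL : Tendsto (fun ε : ℝ => z.im * normSq (f z - f ((c₂ : ℂ) + ε * I))) (𝓝[>] 0)
      (𝓝 (z.im * normSq (f z - (c₄ : ℂ)))) :=
    Tendsto.const_mul _ ((Complex.continuous_normSq.tendsto _).comp
      (tendsto_const_nhds.sub hcont))
  have hR : Tendsto (fun ε : ℝ =>
      normSq (z - ((c₂ : ℂ) + ε * I)) * ((f z).im * ((f ((c₂ : ℂ) + ε * I)).im / ε)))
      (𝓝[>] 0) (𝓝 (normSq (z - (c₂ : ℂ)) * ((f z).im * s))) := by
    apply Tendsto.mul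
    · exact (Complex.continuous_normSq.tendsto _).comp (tendsto_const_nhds.sub hpath)
    · exact Tendsto.const_mul _ hlim
  apply le_of_tendsto_of_tendsto hL hR
  filter_upwards [self_mem_nhdsWithin] with ε (hε : 0 < ε)
  have hw : 0 < ((c₂ : ℂ) + ε * I).im := by simp [hε]
  have hsp := schwarzPick hd' hm hz hw
  have hwim : ((c₂ : ℂ) + ε * I).im = ε := by simp
  rw [hwim] at hsp
  have h2 : z.im * normSq (f z - f ((c₂ : ℂ) + ε * I)) * ε
      ≤ normSq (z - ((c₂ : ℂ) + ε * I)) * ((f z).im * (f ((c₂ : ℂ) + ε * I)).im) := by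
    nlinarith [hsp]
  have h3 : normSq (z - ((c₂ : ℂ) + ε * I)) * ((f z).im * ((f ((c₂ : ℂ) + ε * I)).im / ε))
      = normSq (z - ((c₂ : ℂ) + ε * I)) * ((f z).im * (f ((c₂ : ℂ) + ε * I)).im) / ε := by
    ring
  rw [h3, le_div_iff₀ hε]
  exact h2

lemma f_Q1 (hc₁ : c₁ ∈ Set.Ioo (-1 : ℝ) 1) (hc₂ : c₂ ∈ Set.Ioo (-1 : ℝ) 1) {t s : ℝ}
    (htpos : 0 < t) (ht : t = deriv (fun a : ℝ => (f (a : ℂ)).re) c₁)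
    (hs : s = deriv (fun a : ℝ => (f (a : ℂ)).re) c₂) :
    (c₄ - c₃) ^ 2 ≤ t * s * (c₂ - c₁) ^ 2 := by
  have hdt : HasDerivAt f ((t : ℝ) : ℂ) (c₁ : ℂ) := by rw [ht]; exact f_deriv_real hf hc₁
  have h0 : (f (c₁ : ℂ)).im = 0 := by rw [hf.val1]; simp
  have hlim := im_slope_tendsto hdt h0
  simp only [Complex.ofReal_re] at hlim
  have hpath : Tendsto (fun δ : ℝ => (c₁ : ℂ) + δ * I) (𝓝[>] 0) (𝓝 (c₁ : ℂ)) :=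
    (tendsto_vertical c₁).mono_right nhdsWithin_le_nhds
  have hcont : Tendsto (fun δ : ℝ => f ((c₁ : ℂ) + δ * I)) (𝓝[>] 0) (𝓝 ((c₃ : ℝ) : ℂ)) := by
    have hca : ContinuousAt f (c₁ : ℂ) := (f_diffAt hf (mem_C1_of_real hc₁)).continuousAt
    have := hca.tendsto.comp hpath
    rwa [hf.val1] at this
  have hL : Tendsto (fun δ : ℝ => normSq (f ((c₁ : ℂ) + δ * I) - (c₄ : ℂ))) (𝓝[>] 0)
      (𝓝 (normSq ((c₃ : ℂ) - (c₄ : ℂ)))) :=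
    (Complex.continuous_normSq.tendsto _).comp (hcont.sub tendsto_const_nhds)
  have hR : Tendsto (fun δ : ℝ =>
      normSq (((c₁ : ℂ) + δ * I) - (c₂ : ℂ)) * (((f ((c₁ : ℂ) + δ * I)).im / δ) * s))
      (𝓝[>] 0) (𝓝 (normSq ((c₁ : ℂ) - (c₂ : ℂ)) * (t * s))) := by
    apply Tendsto.mul
    · exact (Complex.continuous_normSq.tendsto _).comp (hpath.sub tendsto_const_nhds)
    · exact hlim.mul tendsto_const_nhds
  have hle : normSq ((c₃ : ℂ) - (c₄ : ℂ)) ≤ normSq ((c₁ : ℂ) - (c₂ : ℂ)) * (t * s) := by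
    apply le_of_tendsto_of_tendsto hL hR
    filter_upwards [self_mem_nhdsWithin] with δ (hδ : 0 < δ)
    have hzim : ((c₁ : ℂ) + δ * I).im = δ := by simp
    have hz : 0 < ((c₁ : ℂ) + δ * I).im := by rw [hzim]; exact hδ
    have hj := f_julia hf hc₁ hc₂ htpos ht hs _ hz
    rw [hzim] at hj
    have h3 : normSq (((c₁ : ℂ) + δ * I) - (c₂ : ℂ)) * (((f ((c₁ : ℂ) + δ * I)).im / δ) * s)
        = normSq (((c₁ : ℂ) + δ * I) - (c₂ : ℂ)) * ((f ((c₁ : ℂ) + δ * I)).im * s) / δ := by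
      ring
    rw [h3, le_div_iff₀ hδ]
    nlinarith [hj]
  have e1 : (c₃ : ℂ) - (c₄ : ℂ) = ((c₃ - c₄ : ℝ) : ℂ) := by push_cast; ring
  have e2 : (c₁ : ℂ) - (c₂ : ℂ) = ((c₁ - c₂ : ℝ) : ℂ) := by push_cast; ring
  rw [e1, e2, Complex.normSq_ofReal, Complex.normSq_ofReal] at hle
  nlinarith [hle]

lemma f_ne_c4 (hc₁ : c₁ ∈ Set.Ioo (-1 : ℝ) 1) (hc₂ : c₂ ∈ Set.Ioo (-1 : ℝ) 1) {t : ℝ}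
    (htpos : 0 < t) (ht : t = deriv (fun a : ℝ => (f (a : ℂ)).re) c₁) :
    ∀ y ∈ Set.Ioo (-1 : ℝ) 1, y ≠ c₂ → f (y : ℂ) ≠ (c₄ : ℂ) := by
  intro y hy hne heq
  have hmono := f_mono hf
  have hA : AnalyticOnNhd ℂ f C1 := hf.holo.analyticOnNhd isOpen_C1
  have hbetween : ∀ a : ℝ, min c₂ y < a → a < max c₂ y → f (a : ℂ) = (c₄ : ℂ) := by
    intro a h1 h2
    have haI : a ∈ Set.Ioo (-1 : ℝ) 1 := by
      rcases le_total c₂ y with hcy | hcy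
      · rw [min_eq_left hcy] at h1; rw [max_eq_right hcy] at h2
        exact ⟨lt_trans hc₂.1 h1, lt_trans h2 hy.2⟩
      · rw [min_eq_right hcy] at h1; rw [max_eq_left hcy] at h2
        exact ⟨lt_trans hy.1 h1, lt_trans h2 hc₂.2⟩
    have hrey : (f (y : ℂ)).re = c₄ := by rw [heq]; simp
    have hrec₂ : (f (c₂ : ℂ)).re = c₄ := by rw [hf.val2]; simp
    have hre : (f (a : ℂ)).re = c₄ := by
      rcases le_total c₂ y with hcy | hcy
      · rw [min_eq_left hcy] at h1; rw [max_eq_right hcy] at h2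
        have l1 := hmono hc₂ haI h1.le
        have l2 := hmono haI hy h2.le
        simp only at l1 l2
        linarith [l1, l2, hrey, hrec₂]
      · rw [min_eq_right hcy] at h1; rw [max_eq_left hcy] at h2
        have l1 := hmono hy haI h1.le
        have l2 := hmono haI hc₂ h2.le
        simp only at l1 l2
        linarith [l1, l2, hrey, hrec₂]
    have him := f_real hf haI
    rw [Complex.ext_iff]
    constructor
    · simpa using hre
    · simpa using him
  have hfreq : ∃ᶠ w in 𝓝[≠] ((c₂ : ℝ) : ℂ), f w = (fun _ => (c₄ : ℂ)) w := by
    rw [Filter.frequently_iff]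
    intro U hU
    rcases Metric.mem_nhdsWithin_iff.1 hU with ⟨ε, hε, hsub⟩
    rcases lt_or_gt_of_ne hne with hcy | hcy
    · -- y < c₂ : take a := c₂ - min ε (c₂ - y) / 2
      set a : ℝ := c₂ - min ε (c₂ - y) / 2 with hadef
      have hmin : 0 < min ε (c₂ - y) := lt_min hε (by linarith)
      have h1 : a < c₂ := by rw [hadef]; linarith
      have h2 : y < a := by
        have := min_le_right ε (c₂ - y)
        rw [hadef]; linarith
      have hfa : f (a : ℂ) = (c₄ : ℂ) := by
        apply hbetween a
        · rw [min_eq_right hcy.le]; exact h2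
        · rw [max_eq_left hcy.le]; exact h1
      refine ⟨(a : ℂ), hsub ⟨?_, ?_⟩, hfa⟩
      · rw [Metric.mem_ball, Complex.dist_eq]
        have : (a : ℂ) - (c₂ : ℂ) = ((a - c₂ : ℝ) : ℂ) := by push_cast; ring
        rw [this, Complex.norm_real, Real.norm_eq_abs, abs_of_neg (by linarith), neg_sub]
        have := min_le_left ε (c₂ - y)
        rw [hadef]; linarith
      · intro hmem
        rw [Set.mem_singleton_iff] at hmem
        have := congrArg Complex.re hmem
        simp only [Complex.ofReal_re] at this
        linarith
    · -- c₂ < y : take a := c₂ + min ε (y - c₂) / 2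
      set a : ℝ := c₂ + min ε (y - c₂) / 2 with hadef
      have hmin : 0 < min ε (y - c₂) := lt_min hε (by linarith)
      have h1 : c₂ < a := by rw [hadef]; linarith
      have h2 : a < y := by
        have := min_le_right ε (y - c₂)
        rw [hadef]; linarith
      have hfa : f (a : ℂ) = (c₄ : ℂ) := by
        apply hbetween a
        · rw [min_eq_left hcy.le]; exact h1
        · rw [max_eq_right hcy.le]; exact h2
      refine ⟨(a : ℂ), hsub ⟨?_, ?_⟩, hfa⟩
      · rw [Metric.mem_ball, Complex.dist_eq]
        have : (a : ℂ) - (c₂ : ℂ) = ((a - c₂ : ℝ) : ℂ) := by push_cast; ring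
        rw [this, Complex.norm_real, Real.norm_eq_abs, abs_of_pos (by linarith)]
        have := min_le_left ε (y - c₂)
        rw [hadef]; linarith
      · intro hmem
        rw [Set.mem_singleton_iff] at hmem
        have := congrArg Complex.re hmem
        simp only [Complex.ofReal_re] at this
        linarith
  have hEq := hA.eqOn_of_preconnected_of_frequently_eq analyticOnNhd_const
    isPreconnected_C1 (mem_C1_of_real hc₂) hfreq
  exact f_nonconst hf hc₁ htpos ht hEq

set_option maxHeartbeats 2000000 in
lemma f_key (hc₁ : c₁ ∈ Set.Ioo (-1 : ℝ) 1) (hc₂ : c₂ ∈ Set.Ioo (-1 : ℝ) 1)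
    (h12 : c₁ < c₂) (h34 : c₃ < c₄) {t s : ℝ}
    (htpos : 0 < t) (hts : t < s)
    (ht : t = deriv (fun a : ℝ => (f (a : ℂ)).re) c₁)
    (hs : s = deriv (fun a : ℝ => (f (a : ℂ)).re) c₂)
    {x : ℝ} (hx : x ∈ Set.Ioo (-1 : ℝ) 1) (hxc : c₂ < x) {κ : ℝ}
    (hκ : κ = (Real.sqrt (s / t) - 1) / (c₂ - c₁)) (hκx : κ * (x - c₂) < 1) :
    c₄ + (x - c₂) * s / (1 - κ * (x - c₂)) ≤ (f (x : ℂ)).re := by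
  have hspos : 0 < s := htpos.trans hts
  set g : ℂ → ℂ := dslope f ((c₂ : ℝ) : ℂ) with hgdef
  set h : ℂ → ℂ := fun z => dslope g ((c₂ : ℝ) : ℂ) z / g z with hhdef
  have hc₂C : ((c₂ : ℝ) : ℂ) ∈ C1 := mem_C1_of_real hc₂
  have hgc₂ : g ((c₂ : ℝ) : ℂ) = ((s : ℝ) : ℂ) := by
    rw [hgdef, dslope_same]
    rw [(f_deriv_real hf hc₂).deriv, ← hs]
  have hgz : ∀ z : ℂ, z ≠ ((c₂ : ℝ) : ℂ) → g z = (f z - ((c₄ : ℝ) : ℂ)) / (z - ((c₂ : ℝ) : ℂ)) := by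
    intro z hz
    rw [hgdef, dslope_of_ne _ hz, slope_def_field, hf.val2]
  have himpos := f_im_pos hf hc₁ htpos ht
  have himneg := f_im_neg hf hc₁ htpos ht
  have hfne := f_ne_c4 hf hc₁ hc₂ htpos ht
  have hgne : ∀ z ∈ C1, g z ≠ 0 := by
    intro z hzC
    rcases eq_or_ne z ((c₂ : ℝ) : ℂ) with rfl | hz
    · rw [hgc₂]
      exact_mod_cast hspos.ne'
    · rw [hgz z hz]
      apply div_ne_zero _ (sub_ne_zero.2 hz)
      rcases lt_trichotomy z.im 0 with him | him | him
      · intro hzero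
        have := himneg z him
        rw [sub_eq_zero] at hzero
        rw [hzero] at this
        simp at this
      · -- real point
        have hzre : z = ((z.re : ℝ) : ℂ) := by
          rw [Complex.ext_iff]; simp [him]
        have hreI : z.re ∈ Set.Ioo (-1 : ℝ) 1 := by
          rcases hzC with himne | hre
          · exact absurd him himne
          · exact hre
        have hrene : z.re ≠ c₂ := by
          intro hcon
          apply hz
          rw [hzre, hcon]
        have := hfne z.re hreI hrene
        rw [← hzre] at this
        exact sub_ne_zero.2 this
      · intro hzero
        have := himpos z him
        rw [sub_eq_zero] at hzero
        rw [hzero] at this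
        simp at this
  have hgdiff : DifferentiableOn ℂ g C1 :=
    (differentiableOn_dslope (isOpen_C1.mem_nhds hc₂C)).mpr hf.holo
  have hkdiff : DifferentiableOn ℂ (dslope g ((c₂ : ℝ) : ℂ)) C1 :=
    (differentiableOn_dslope (isOpen_C1.mem_nhds hc₂C)).mpr hgdiff
  have hhdiff : DifferentiableOn ℂ h C1 := hkdiff.div hgdiff hgne
  have hfnez : ∀ z : ℂ, z.im ≠ 0 → f z - ((c₄ : ℝ) : ℂ) ≠ 0 := by
    intro z him hzero
    rw [sub_eq_zero] at hzero
    rcases him.lt_or_gt with hlt | hgt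
    · have := himneg z hlt
      rw [hzero] at this; simp at this
    · have := himpos z hgt
      rw [hzero] at this; simp at this
  have hform : ∀ z : ℂ, z ≠ ((c₂ : ℝ) : ℂ) → f z - ((c₄ : ℝ) : ℂ) ≠ 0 →
      h z = 1 / (z - ((c₂ : ℝ) : ℂ)) - ((s : ℝ) : ℂ) / (f z - ((c₄ : ℝ) : ℂ)) := by
    intro z hz hfz
    have hzc : z - ((c₂ : ℝ) : ℂ) ≠ 0 := sub_ne_zero.2 hz
    rw [hhdef]
    simp only
    rw [dslope_of_ne _ hz, slope_def_field, hgc₂, hgz z hz]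
    field_simp
  have him_h : ∀ z : ℂ, 0 < z.im → 0 ≤ (h z).im := by
    intro z hz
    have hzne : z ≠ ((c₂ : ℝ) : ℂ) := by
      intro hcon
      rw [hcon] at hz; simp at hz
    have hfz := hfnez z hz.ne'
    have hzc : z - ((c₂ : ℝ) : ℂ) ≠ 0 := sub_ne_zero.2 hzne
    have hp1 : 0 < normSq (z - ((c₂ : ℝ) : ℂ)) := Complex.normSq_pos.2 hzc
    have hp2 : 0 < normSq (f z - ((c₄ : ℝ) : ℂ)) := Complex.normSq_pos.2 hfz
    have he : (h z).im = -(z.im / normSq (z - ((c₂ : ℝ) : ℂ)))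
        + s * ((f z).im / normSq (f z - ((c₄ : ℝ) : ℂ))) := by
      rw [hform z hzne hfz]
      simp only [Complex.sub_im, Complex.div_im, Complex.one_im, Complex.one_re,
        Complex.ofReal_im, Complex.ofReal_re, Complex.sub_re]
      ring
    rw [he]
    have hj := f_julia hf hc₁ hc₂ htpos ht hs z hz
    have h1 : z.im / normSq (z - ((c₂ : ℝ) : ℂ))
        ≤ s * ((f z).im / normSq (f z - ((c₄ : ℝ) : ℂ))) := by
      rw [mul_div_assoc', div_le_div_iff₀ hp1 hp2]
      nlinarith [hj]
    linarith
  have hreal_h : ∀ y ∈ Set.Ioo (-1 : ℝ) 1, (h ((y : ℝ) : ℂ)).im = 0 := by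
    have hne_case : ∀ y ∈ Set.Ioo (-1 : ℝ) 1, y ≠ c₂ → (h ((y : ℝ) : ℂ)).im = 0 := by
      intro y hy hne
      have hzne : ((y : ℝ) : ℂ) ≠ ((c₂ : ℝ) : ℂ) := by
        intro hcon
        exact hne (Complex.ofReal_inj.1 hcon)
      have hfz : f ((y : ℝ) : ℂ) - ((c₄ : ℝ) : ℂ) ≠ 0 := sub_ne_zero.2 (hfne y hy hne)
      rw [hform _ hzne hfz]
      simp only [Complex.sub_im, Complex.div_im, Complex.one_im, Complex.one_re,
        Complex.ofReal_im, Complex.ofReal_re, Complex.sub_re, f_real hf hy]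
      ring
    intro y hy
    rcases eq_or_ne y c₂ with heq | hne
    · subst heq
      have hdiffh : DifferentiableAt ℂ h ((y : ℝ) : ℂ) :=
        hhdiff.differentiableAt (isOpen_C1.mem_nhds hc₂C)
      have hca : ContinuousAt (fun a : ℝ => (h ((a : ℝ) : ℂ)).im) y := by
        apply ContinuousAt.comp Complex.continuous_im.continuousAt
        exact hdiffh.continuousAt.comp Complex.continuous_ofReal.continuousAt
      have t1 : Tendsto (fun a : ℝ => (h ((a : ℝ) : ℂ)).im) (𝓝[≠] y)
          (𝓝 ((h ((y : ℝ) : ℂ)).im)) := hca.tendsto.mono_left nhdsWithin_le_nhds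
      have ev : (fun _ : ℝ => (0 : ℝ)) =ᶠ[𝓝[≠] y] (fun a : ℝ => (h ((a : ℝ) : ℂ)).im) := by
        filter_upwards [(isOpen_Ioo.eventually_mem hy).filter_mono nhdsWithin_le_nhds,
          self_mem_nhdsWithin] with a ha hane
        exact (hne_case a ha hane).symm
      have t2 : Tendsto (fun a : ℝ => (h ((a : ℝ) : ℂ)).im) (𝓝[≠] y) (𝓝 0) :=
        tendsto_const_nhds.congr' ev
      exact tendsto_nhds_unique t1 t2
    · exact hne_case y hy hne
  have hmono := f_mono hf
  -- monotonicity of re ∘ h on the interval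
  have hmono_h : MonotoneOn (fun a : ℝ => (h ((a : ℝ) : ℂ)).re) (Set.Ioo (-1 : ℝ) 1) := by
    apply monotoneOn_of_deriv_nonneg (convex_Ioo _ _)
    · intro y hy
      have hda : DifferentiableAt ℂ h ((y : ℝ) : ℂ) :=
        hhdiff.differentiableAt (isOpen_C1.mem_nhds (mem_C1_of_real hy))
      exact (hda.hasDerivAt.real_of_complex.continuousAt).continuousWithinAt
    · intro y hy
      rw [interior_Ioo] at hy
      have hda : DifferentiableAt ℂ h ((y : ℝ) : ℂ) :=
        hhdiff.differentiableAt (isOpen_C1.mem_nhds (mem_C1_of_real hy))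
      exact hda.hasDerivAt.real_of_complex.differentiableAt.differentiableWithinAt
    · intro y hy
      rw [interior_Ioo] at hy
      have hda : DifferentiableAt ℂ h ((y : ℝ) : ℂ) :=
        hhdiff.differentiableAt (isOpen_C1.mem_nhds (mem_C1_of_real hy))
      rw [hda.hasDerivAt.real_of_complex.deriv]
      have hlim := im_slope_tendsto hda.hasDerivAt (hreal_h y hy)
      apply ge_of_tendsto hlim
      filter_upwards [self_mem_nhdsWithin] with ε (hε : 0 < ε)
      have him : 0 < (((y : ℝ) : ℂ) + ε * I).im := by simp [hε]
      exact div_nonneg (him_h _ him) hε.le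
  -- value at c₁
  set G₁ : ℝ := (c₃ - c₄) / (c₁ - c₂) with hG₁def
  have hc₁ne : ((c₁ : ℝ) : ℂ) ≠ ((c₂ : ℝ) : ℂ) := by
    simp only [ne_eq, Complex.ofReal_inj]
    exact ne_of_lt h12
  have hG₁c : g ((c₁ : ℝ) : ℂ) = ((G₁ : ℝ) : ℂ) := by
    rw [hgz _ hc₁ne, hf.val1, hG₁def]
    push_cast
    ring
  have hG₁pos : 0 < G₁ := by
    rw [hG₁def, div_pos_iff]
    right
    constructor <;> linarith
  have hG₁ne : ((G₁ : ℝ) : ℂ) ≠ 0 := by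
    simp only [ne_eq, Complex.ofReal_eq_zero]
    exact hG₁pos.ne'
  have hhc₁ : h ((c₁ : ℝ) : ℂ) = (((G₁ - s) / ((c₁ - c₂) * G₁) : ℝ) : ℂ) := by
    rw [hhdef]
    simp only
    rw [dslope_of_ne _ hc₁ne, slope_def_field, hgc₂, hG₁c]
    simp only [Complex.ofReal_div, Complex.ofReal_sub, Complex.ofReal_mul]
    rw [div_div]
  have hhc₁re : (h ((c₁ : ℝ) : ℂ)).re = (G₁ - s) / ((c₁ - c₂) * G₁) := by
    rw [hhc₁, Complex.ofReal_re]
  -- value at x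
  have hxne2 : x ≠ c₂ := ne_of_gt hxc
  have hxne : ((x : ℝ) : ℂ) ≠ ((c₂ : ℝ) : ℂ) := by
    simp only [ne_eq, Complex.ofReal_inj]
    exact hxne2
  set Fx : ℝ := (f ((x : ℝ) : ℂ)).re with hFxdef
  have hfx : f ((x : ℝ) : ℂ) = ((Fx : ℝ) : ℂ) := by
    rw [Complex.ext_iff]
    constructor
    · simp [hFxdef]
    · simp [f_real hf hx]
  set Gx : ℝ := (Fx - c₄) / (x - c₂) with hGxdef
  have hGxc : g ((x : ℝ) : ℂ) = ((Gx : ℝ) : ℂ) := by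
    rw [hgz _ hxne, hfx, hGxdef]
    push_cast
    ring
  have hFxge : c₄ ≤ Fx := by
    have := hmono hc₂ hx hxc.le
    simp only at this
    rw [hf.val2] at this
    simpa using this
  have hFxne : Fx ≠ c₄ := by
    intro hcon
    apply hfne x hx hxne2
    rw [hfx, hcon]
  have hGxpos : 0 < Gx := by
    rw [hGxdef]
    apply div_pos _ (by linarith)
    rcases lt_or_eq_of_le hFxge with hlt | heq
    · linarith
    · exact absurd heq.symm hFxne
  have hhx : h ((x : ℝ) : ℂ) = (((Gx - s) / ((x - c₂) * Gx) : ℝ) : ℂ) := by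
    rw [hhdef]
    simp only
    rw [dslope_of_ne _ hxne, slope_def_field, hgc₂, hGxc]
    simp only [Complex.ofReal_div, Complex.ofReal_sub, Complex.ofReal_mul]
    rw [div_div]
  have hhxre : (h ((x : ℝ) : ℂ)).re = (Gx - s) / ((x - c₂) * Gx) := by
    rw [hhx, Complex.ofReal_re]
  -- monotone chain
  have hchain : (h ((c₁ : ℝ) : ℂ)).re ≤ (h ((x : ℝ) : ℂ)).re :=
    hmono_h hc₁ hx (by linarith)
  -- κ ≤ value at c₁
  have hts' : (0 : ℝ) ≤ t * s := by positivity
  have hQ1 := f_Q1 hf hc₁ hc₂ htpos ht hs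
  have hG₁le : G₁ ≤ Real.sqrt (t * s) := by
    have e : G₁ * (c₂ - c₁) = c₄ - c₃ := by
      rw [hG₁def, div_mul_eq_mul_div, div_eq_iff (by intro hc; apply absurd hc; intro hc2; linarith [hc2] : c₁ - c₂ ≠ 0)]
      ring
    have h1 : G₁ ^ 2 ≤ t * s := by
      have h2 : G₁ ^ 2 * (c₂ - c₁) ^ 2 ≤ t * s * (c₂ - c₁) ^ 2 := by
        calc G₁ ^ 2 * (c₂ - c₁) ^ 2 = (c₄ - c₃) ^ 2 := by rw [← e]; ring
        _ ≤ t * s * (c₂ - c₁) ^ 2 := hQ1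
      have h3 : (0 : ℝ) < (c₂ - c₁) ^ 2 := pow_pos (by linarith) 2
      nlinarith [h2, h3]
    exact Real.le_sqrt_of_sq_le h1
  have hκc₁ : κ ≤ (G₁ - s) / ((c₁ - c₂) * G₁) := by
    have ha2 : Real.sqrt t ^ 2 = t := Real.sq_sqrt htpos.le
    have hb2 : Real.sqrt s ^ 2 = s := Real.sq_sqrt hspos.le
    have hapos : 0 < Real.sqrt t := Real.sqrt_pos.2 htpos
    have hbpos : 0 < Real.sqrt s := Real.sqrt_pos.2 hspos
    have hab : Real.sqrt (t * s) = Real.sqrt t * Real.sqrt s := Real.sqrt_mul htpos.le s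
    have hd : Real.sqrt (s / t) = Real.sqrt s / Real.sqrt t := Real.sqrt_div hspos.le t
    have hG₁ab : G₁ ≤ Real.sqrt t * Real.sqrt s := by rw [← hab]; exact hG₁le
    have hne1 : (c₁ - c₂) * G₁ ≠ 0 := (mul_neg_of_neg_of_pos (by linarith) hG₁pos).ne
    have hne2 : (c₂ - c₁) * G₁ ≠ 0 := (mul_pos (by linarith) hG₁pos).ne'
    have e : (G₁ - s) / ((c₁ - c₂) * G₁) = (s - G₁) / ((c₂ - c₁) * G₁) := by
      rw [div_eq_div_iff hne1 hne2]
      ring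
    rw [hκ, e, hd, div_le_div_iff₀ (by linarith) (mul_pos (by linarith) hG₁pos)]
    have key : Real.sqrt s / Real.sqrt t * G₁ ≤ s := by
      have h5 : Real.sqrt s / Real.sqrt t * G₁
          ≤ Real.sqrt s / Real.sqrt t * (Real.sqrt t * Real.sqrt s) :=
        mul_le_mul_of_nonneg_left hG₁ab (by positivity)
      have e2 : Real.sqrt s / Real.sqrt t * (Real.sqrt t * Real.sqrt s) = Real.sqrt s ^ 2 := by
        rw [div_mul_eq_mul_div, mul_comm (Real.sqrt t) (Real.sqrt s), ← mul_assoc,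
          mul_div_assoc, div_self hapos.ne', mul_one, ← sq]
      rw [e2, hb2] at h5
      exact h5
    nlinarith [mul_le_mul_of_nonneg_left key (by linarith : (0:ℝ) ≤ c₂ - c₁)]
  -- conclude
  have hκx' : κ ≤ (Gx - s) / ((x - c₂) * Gx) := by
    calc κ ≤ (G₁ - s) / ((c₁ - c₂) * G₁) := hκc₁
    _ = (h ((c₁ : ℝ) : ℂ)).re := hhc₁re.symm
    _ ≤ (h ((x : ℝ) : ℂ)).re := hchain
    _ = (Gx - s) / ((x - c₂) * Gx) := hhxre
  have hrpos : 0 < x - c₂ := by linarith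
  have hineq1 : s / Gx ≤ 1 - κ * (x - c₂) := by
    have h1 : κ * (x - c₂) ≤ ((Gx - s) / ((x - c₂) * Gx)) * (x - c₂) :=
      mul_le_mul_of_nonneg_right hκx' hrpos.le
    have h2 : ((Gx - s) / ((x - c₂) * Gx)) * (x - c₂) = 1 - s / Gx := by
      field_simp
    rw [h2] at h1
    linarith
  have h1κr : 0 < 1 - κ * (x - c₂) := by linarith
  have hGxge : s / (1 - κ * (x - c₂)) ≤ Gx := by
    rw [div_le_iff₀ h1κr]
    rw [div_le_iff₀ hGxpos] at hineq1
    linarith [hineq1]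
  have hFx : Fx = c₄ + (x - c₂) * Gx := by
    rw [hGxdef]
    field_simp
    ring
  have hfinal : c₄ + (x - c₂) * (s / (1 - κ * (x - c₂))) ≤ c₄ + (x - c₂) * Gx := by
    have := mul_le_mul_of_nonneg_left hGxge hrpos.le
    linarith
  rw [← hFx] at hfinal
  calc c₄ + (x - c₂) * s / (1 - κ * (x - c₂))
      = c₄ + (x - c₂) * (s / (1 - κ * (x - c₂))) := by rw [mul_div_assoc]
  _ ≤ Fx := hfinal

end main

set_option maxHeartbeats 1000000 in
theorem stmt13 (c₁ c₂ c₃ c₄ : ℝ)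
    (h1 : -1 < c₁) (h12 : c₁ < c₂) (h2 : c₂ < 1)
    (h3 : -1 < c₃) (h34 : c₃ < c₄) (h4 : c₄ < 1)
    (f : ℂ → ℂ) (hf : MemA1 c₁ c₂ c₃ c₄ f)
    (t s X : ℝ)
    (ht : t = deriv (fun y : ℝ => (f y).re) c₁)
    (hs : s = deriv (fun y : ℝ => (f y).re) c₂)
    (htpos : 0 < t) (hts : t < s)
    (hX : X = 2 * s * (Real.sqrt (s / t) - 1) / (c₂ - c₁)) :
    0 < X ∧
    4 * s ^ 3 / (2 * s + X * (c₂ - c₁)) ^ 2 = t ∧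
    (∀ X' : ℝ, 0 < X' →
      4 * s ^ 3 / (2 * s + X' * (c₂ - c₁)) ^ 2 = t → X' = X) ∧
    ∀ x ∈ Set.Ioo c₂ (1 : ℝ), 0 < 2 * s + X * (c₂ - x) →
      c₄ + (4 * s ^ 3 / X) * (1 / (2 * s + X * (c₂ - x)) - 1 / (2 * s)) ≤ (f x).re := by
  have hs0 : 0 < s := htpos.trans hts
  have hΔ : 0 < c₂ - c₁ := by linarith
  have hst : 1 < s / t := (one_lt_div htpos).2 hts
  have hsq1 : 1 < Real.sqrt (s / t) := by
    rw [show (1:ℝ) = Real.sqrt 1 by simp]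
    exact Real.sqrt_lt_sqrt (by norm_num) hst
  have hXpos : 0 < X := by
    rw [hX]
    apply div_pos _ hΔ
    have : 0 < Real.sqrt (s / t) - 1 := by linarith
    positivity
  have hkey : 2 * s + X * (c₂ - c₁) = 2 * s * Real.sqrt (s / t) := by
    rw [hX, div_mul_cancel₀ _ hΔ.ne']; ring
  have hsqsq : Real.sqrt (s / t) ^ 2 = s / t := Real.sq_sqrt (by positivity)
  have heq : 4 * s ^ 3 / (2 * s + X * (c₂ - c₁)) ^ 2 = t := by
    rw [hkey, mul_pow, mul_pow, hsqsq]
    field_simp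
    ring
  refine ⟨hXpos, heq, ?_, ?_⟩
  · intro X' hX' hEq
    have hD : 0 < 2 * s + X' * (c₂ - c₁) := by positivity
    have h2' : (2 * s + X' * (c₂ - c₁)) ^ 2 = (2 * s * Real.sqrt (s / t)) ^ 2 := by
      have hne : (2 * s + X' * (c₂ - c₁)) ^ 2 ≠ 0 := by positivity
      have hthis : 4 * s ^ 3 = t * (2 * s + X' * (c₂ - c₁)) ^ 2 := by
        field_simp at hEq ⊢; linarith [hEq]
      have h3' : 4 * s ^ 3 = t * (2 * s * Real.sqrt (s / t)) ^ 2 := by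
        rw [mul_pow, mul_pow, hsqsq]; field_simp; ring
      nlinarith [hthis, h3']
    have hD' : 0 < 2 * s * Real.sqrt (s / t) := by positivity
    have h4' : 2 * s + X' * (c₂ - c₁) = 2 * s * Real.sqrt (s / t) := by
      nlinarith [h2']
    have : X' * (c₂ - c₁) = X * (c₂ - c₁) := by rw [← hkey] at h4'; linarith
    exact mul_right_cancel₀ hΔ.ne' this
  · intro x hx hden
    have hc₁mem : c₁ ∈ Set.Ioo (-1 : ℝ) 1 := ⟨h1, by linarith [hx.1, hx.2]⟩
    have hc₂mem : c₂ ∈ Set.Ioo (-1 : ℝ) 1 := ⟨by linarith, h2⟩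
    have hxmem : x ∈ Set.Ioo (-1 : ℝ) 1 := ⟨by linarith [hx.1], hx.2⟩
    have hκdef : X / (2 * s) = (Real.sqrt (s / t) - 1) / (c₂ - c₁) := by
      rw [hX]
      field_simp
    have hκx : (X / (2 * s)) * (x - c₂) < 1 := by
      rw [div_mul_eq_mul_div, div_lt_one (by positivity)]
      nlinarith [hden]
    have happly := f_key hf hc₁mem hc₂mem h12 h34 htpos hts ht hs hxmem hx.1 hκdef hκx
    have hDne : 2 * s + X * (c₂ - x) ≠ 0 := hden.ne'
    have hrewrite : c₄ + (4 * s ^ 3 / X) * (1 / (2 * s + X * (c₂ - x)) - 1 / (2 * s))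
        = c₄ + (x - c₂) * s / (1 - (X / (2 * s)) * (x - c₂)) := by
      have hd2 : 1 - (X / (2 * s)) * (x - c₂) = (2 * s + X * (c₂ - x)) / (2 * s) := by
        field_simp
        ring
      rw [hd2, div_div_eq_mul_div]
      rw [div_sub_div _ _ hDne (by positivity : (2:ℝ) * s ≠ 0)]
      field_simp
      ring
    rw [hrewrite]
    exact happly
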